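/- Let α, x, q be real numbers and n, r natural numbers. Then Σ_{k=0}^{n} L^{(α+k)}_{r}(x) C(n,k) (1-q)^k q^{n-k} = Σ_{j=0}^{min(n,r)} (-1)^j C(n,j) L^{(α+n)}_{r-j}(x) q^j, adopting the convention that L^{(β)}_{r-j} = 0 when j > r. -/

import Mathlib

open Finset

/-- Generalized binomial coefficient `t(t-1)⋯(t-s+1)/s!` of a real `t`. -/
noncomputable def rchoose (t : ℝ) (s : ℕ) : ℝ :=
  (∏ i ∈ range s, (t - (i : ℝ))) / (s.factorial : ℝ)

/-- Generalized Laguerre polynomial `L^{(β)}_m(x)`. -/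
noncomputable def genLaguerre (β : ℝ) (m : ℕ) (x : ℝ) : ℝ :=
  ∑ i ∈ range (m + 1), ((-1 : ℝ) ^ i / (i.factorial : ℝ)) * rchoose ((m : ℝ) + β) (m - i) * x ^ i

lemma rchoose_zero (t : ℝ) : rchoose t 0 = 1 := by
  simp [rchoose]

lemma rchoose_pascal (t : ℝ) (s : ℕ) :
    rchoose (t + 1) (s + 1) = rchoose t (s + 1) + rchoose t s := by
  unfold rchoose
  have h1 : ∏ i ∈ range (s + 1), (t + 1 - (i : ℝ)) = (t + 1) * ∏ i ∈ range s, (t - (i : ℝ)) := by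
    rw [Finset.prod_range_succ']
    have : ∀ i ∈ range s, (t + 1 - ((i + 1 : ℕ) : ℝ)) = t - (i : ℝ) := by
      intro i _; push_cast; ring
    rw [Finset.prod_congr rfl this]
    simp [mul_comm]
  have h2 : ∏ i ∈ range (s + 1), (t - (i : ℝ)) = (∏ i ∈ range s, (t - (i : ℝ))) * (t - s) := by
    rw [Finset.prod_range_succ]
  have hf : ((s + 1).factorial : ℝ) = (s + 1) * (s.factorial : ℝ) := by
    rw [Nat.factorial_succ]; push_cast; ring
  have hs : (s.factorial : ℝ) ≠ 0 := Nat.cast_ne_zero.mpr s.factorial_ne_zero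
  have hs1 : ((s : ℝ) + 1) ≠ 0 := by positivity
  rw [h1, h2, hf]
  field_simp
  ring

lemma genLaguerre_zero (β x : ℝ) : genLaguerre β 0 x = 1 := by
  simp [genLaguerre, rchoose]

lemma genLaguerre_step (β x : ℝ) (m : ℕ) :
    genLaguerre (β + 1) (m + 1) x = genLaguerre β (m + 1) x + genLaguerre (β + 1) m x := by
  unfold genLaguerre
  rw [Finset.sum_range_succ (n := m + 1), Finset.sum_range_succ (n := m + 1)]
  have hlast : ((-1 : ℝ) ^ (m + 1) / ((m + 1).factorial : ℝ)) *
      rchoose (((m + 1 : ℕ) : ℝ) + (β + 1)) ((m + 1) - (m + 1)) * x ^ (m + 1)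
      = ((-1 : ℝ) ^ (m + 1) / ((m + 1).factorial : ℝ)) *
      rchoose (((m + 1 : ℕ) : ℝ) + β) ((m + 1) - (m + 1)) * x ^ (m + 1) := by
    simp [rchoose_zero]
  rw [hlast]
  have hmain : ∑ i ∈ range (m + 1), ((-1 : ℝ) ^ i / (i.factorial : ℝ)) *
      rchoose (((m + 1 : ℕ) : ℝ) + (β + 1)) ((m + 1) - i) * x ^ i
      = ∑ i ∈ range (m + 1), (((-1 : ℝ) ^ i / (i.factorial : ℝ)) *
        rchoose (((m + 1 : ℕ) : ℝ) + β) ((m + 1) - i) * x ^ i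
        + ((-1 : ℝ) ^ i / (i.factorial : ℝ)) *
        rchoose ((m : ℝ) + (β + 1)) (m - i) * x ^ i) := by
    apply Finset.sum_congr rfl
    intro i hi
    have hi' : i ≤ m := Nat.lt_succ_iff.mp (Finset.mem_range.mp hi)
    have hsub : (m + 1) - i = (m - i) + 1 := by omega
    have hp := rchoose_pascal ((m : ℝ) + β + 1) (m - i)
    have e1 : ((m + 1 : ℕ) : ℝ) + (β + 1) = ((m : ℝ) + β + 1) + 1 := by push_cast; ring
    have e2 : ((m + 1 : ℕ) : ℝ) + β = (m : ℝ) + β + 1 := by push_cast; ring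
    have e3 : (m : ℝ) + (β + 1) = (m : ℝ) + β + 1 := by ring
    rw [hsub, e1, e2, e3, hp]
    ring
  rw [hmain, Finset.sum_add_distrib]
  ring

/-- `L^{(β)}_{r-j}` with the convention that it is `0` for `j > r`. -/
noncomputable def laguerreTrunc (β : ℝ) (r : ℕ) (x : ℝ) (j : ℕ) : ℝ :=
  if j ≤ r then genLaguerre β (r - j) x else 0

lemma laguerreTrunc_step (β x : ℝ) (r j : ℕ) :
    laguerreTrunc (β + 1) r x j = laguerreTrunc β r x j + laguerreTrunc (β + 1) r x (j + 1) := by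
  unfold laguerreTrunc
  rcases lt_trichotomy j r with h | h | h
  · rw [if_pos h.le, if_pos h.le, if_pos (show j + 1 ≤ r from h)]
    have : r - j = (r - (j + 1)) + 1 := by omega
    rw [this, genLaguerre_step]
  · subst h
    simp [genLaguerre_zero]
  · rw [if_neg (by omega), if_neg (by omega), if_neg (by omega)]
    ring

/-- Generic binomial Pascal splitting of a sum. -/
lemma binom_split (a : ℕ → ℝ) (n : ℕ) :
    ∑ k ∈ range (n + 2), ((n + 1).choose k : ℝ) * a k
      = ∑ k ∈ range (n + 1), (n.choose k : ℝ) * a k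
        + ∑ k ∈ range (n + 1), (n.choose k : ℝ) * a (k + 1) := by
  rw [Finset.sum_range_succ' (f := fun k => ((n + 1).choose k : ℝ) * a k) (n + 1)]
  have h1 : ∀ k ∈ range (n + 1), ((n + 1).choose (k + 1) : ℝ) * a (k + 1)
      = (n.choose k : ℝ) * a (k + 1) + (n.choose (k + 1) : ℝ) * a (k + 1) := by
    intro k _
    rw [Nat.choose_succ_succ]
    push_cast; ring
  rw [Finset.sum_congr rfl h1, Finset.sum_add_distrib]
  have h2 : ∑ k ∈ range (n + 1), (n.choose (k + 1) : ℝ) * a (k + 1)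
      + ((n + 1).choose 0 : ℝ) * a 0
      = ∑ k ∈ range (n + 1), (n.choose k : ℝ) * a k := by
    rw [show ((n + 1).choose 0 : ℝ) * a 0 = (n.choose 0 : ℝ) * a 0 by simp]
    rw [← Finset.sum_range_succ' (f := fun k => (n.choose k : ℝ) * a k) (n + 1)]
    rw [Finset.sum_range_succ]
    simp [Nat.choose_eq_zero_of_lt]
  linarith [h2]

lemma key (x q : ℝ) (r : ℕ) : ∀ (n : ℕ) (α : ℝ),
    ∑ k ∈ range (n + 1), genLaguerre (α + (k : ℝ)) r x * (n.choose k : ℝ) * (1 - q) ^ k * q ^ (n - k)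
      = ∑ j ∈ range (n + 1),
        (-1 : ℝ) ^ j * (n.choose j : ℝ) * laguerreTrunc (α + (n : ℝ)) r x j * q ^ j := by
  intro n
  induction n with
  | zero =>
    intro α
    simp [laguerreTrunc]
  | succ n ih =>
    intro α
    -- Left side: split via Pascal
    have hL : ∑ k ∈ range (n + 1 + 1), genLaguerre (α + (k : ℝ)) r x * ((n + 1).choose k : ℝ)
          * (1 - q) ^ k * q ^ (n + 1 - k)
        = q * (∑ k ∈ range (n + 1), genLaguerre (α + (k : ℝ)) r x * (n.choose k : ℝ)
            * (1 - q) ^ k * q ^ (n - k))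
          + (1 - q) * (∑ k ∈ range (n + 1), genLaguerre ((α + 1) + (k : ℝ)) r x * (n.choose k : ℝ)
            * (1 - q) ^ k * q ^ (n - k)) := by
      have := binom_split (fun k => genLaguerre (α + (k : ℝ)) r x * (1 - q) ^ k * q ^ (n + 1 - k)) n
      calc ∑ k ∈ range (n + 1 + 1), genLaguerre (α + (k : ℝ)) r x * ((n + 1).choose k : ℝ)
              * (1 - q) ^ k * q ^ (n + 1 - k)
          = ∑ k ∈ range (n + 2), ((n + 1).choose k : ℝ)
              * (genLaguerre (α + (k : ℝ)) r x * (1 - q) ^ k * q ^ (n + 1 - k)) := by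
            apply Finset.sum_congr rfl; intro k _; ring
        _ = ∑ k ∈ range (n + 1), (n.choose k : ℝ)
              * (genLaguerre (α + (k : ℝ)) r x * (1 - q) ^ k * q ^ (n + 1 - k))
            + ∑ k ∈ range (n + 1), (n.choose k : ℝ)
              * (genLaguerre (α + ((k + 1 : ℕ) : ℝ)) r x * (1 - q) ^ (k + 1) * q ^ (n + 1 - (k + 1))) :=
            this
        _ = _ := by
            congr 1
            · rw [Finset.mul_sum]
              apply Finset.sum_congr rfl
              intro k hk
              have hk' : k ≤ n := Nat.lt_succ_iff.mp (Finset.mem_range.mp hk)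
              have : n + 1 - k = (n - k) + 1 := by omega
              rw [this, pow_succ]
              ring
            · rw [Finset.mul_sum]
              apply Finset.sum_congr rfl
              intro k hk
              have : n + 1 - (k + 1) = n - k := by omega
              have hc : α + ((k + 1 : ℕ) : ℝ) = (α + 1) + (k : ℝ) := by push_cast; ring
              rw [this, hc, pow_succ]
              ring
    rw [hL, ih α, ih (α + 1)]
    -- Right side: split via Pascal
    have hR : ∑ j ∈ range (n + 1 + 1), (-1 : ℝ) ^ j * ((n + 1).choose j : ℝ)
          * laguerreTrunc (α + ((n + 1 : ℕ) : ℝ)) r x j * q ^ j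
        = ∑ j ∈ range (n + 1), (n.choose j : ℝ)
            * ((-1 : ℝ) ^ j * laguerreTrunc (α + ((n + 1 : ℕ) : ℝ)) r x j * q ^ j)
          + ∑ j ∈ range (n + 1), (n.choose j : ℝ)
            * ((-1 : ℝ) ^ (j + 1) * laguerreTrunc (α + ((n + 1 : ℕ) : ℝ)) r x (j + 1) * q ^ (j + 1)) := by
      have := binom_split
        (fun j => (-1 : ℝ) ^ j * laguerreTrunc (α + ((n + 1 : ℕ) : ℝ)) r x j * q ^ j) n
      calc ∑ j ∈ range (n + 1 + 1), (-1 : ℝ) ^ j * ((n + 1).choose j : ℝ)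
              * laguerreTrunc (α + ((n + 1 : ℕ) : ℝ)) r x j * q ^ j
          = ∑ j ∈ range (n + 2), ((n + 1).choose j : ℝ)
              * ((-1 : ℝ) ^ j * laguerreTrunc (α + ((n + 1 : ℕ) : ℝ)) r x j * q ^ j) := by
            apply Finset.sum_congr rfl; intro j _; ring
        _ = _ := this
    rw [hR]
    rw [← Finset.sum_add_distrib, Finset.mul_sum, Finset.mul_sum, ← Finset.sum_add_distrib]
    apply Finset.sum_congr rfl
    intro j hj
    have hβ : α + ((n + 1 : ℕ) : ℝ) = (α + (n : ℝ)) + 1 := by push_cast; ring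
    have hβ' : (α + 1) + (n : ℝ) = (α + (n : ℝ)) + 1 := by ring
    rw [hβ, hβ']
    have hstep := laguerreTrunc_step (α + (n : ℝ)) x r j
    rw [hstep]
    ring

theorem laguerre_parameter_bernoulli_transform (α x q : ℝ) (n r : ℕ) :
    ∑ k ∈ range (n + 1), genLaguerre (α + (k : ℝ)) r x * (n.choose k : ℝ) * (1 - q) ^ k * q ^ (n - k) =
      ∑ j ∈ range (min n r + 1),
        (-1 : ℝ) ^ j * (n.choose j : ℝ) * genLaguerre (α + (n : ℝ)) (r - j) x * q ^ j := by
  rw [key x q r n α]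
  have h1 : ∑ j ∈ range (min n r + 1),
        (-1 : ℝ) ^ j * (n.choose j : ℝ) * genLaguerre (α + (n : ℝ)) (r - j) x * q ^ j
      = ∑ j ∈ range (min n r + 1),
        (-1 : ℝ) ^ j * (n.choose j : ℝ) * laguerreTrunc (α + (n : ℝ)) r x j * q ^ j := by
    apply Finset.sum_congr rfl
    intro j hj
    rw [Finset.mem_range] at hj
    rw [show laguerreTrunc (α + (n : ℝ)) r x j = genLaguerre (α + (n : ℝ)) (r - j) x from
      if_pos (by omega)]
  rw [h1]
  symm
  apply Finset.sum_subset
  · intro j hj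
    rw [Finset.mem_range] at *
    omega
  · intro j hj hj'
    rw [Finset.mem_range] at *
    rw [show laguerreTrunc (α + (n : ℝ)) r x j = 0 from if_neg (by omega)]
    ring
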